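/- Let s > 0, τ ∈ ℝ and γ ∈ (0,1). For z ∈ ℂ ∖ ℝ define the 4×4 matrices 𝖩₁(z) = I + e^{−θ₁(sz)+θ₂(sz)+2τsz}·E_{1,2} + (1−γ)^{−1}e^{2θ₂(sz)}·E_{4,2} − e^{−θ₁(sz)+θ₂(sz)−2τsz}·E_{4,3}, 𝖩₂(z) = I − e^{−θ₁(sz)+θ₂(sz)+2τsz}·E_{1,2} + (1−γ)^{−1}e^{2θ₂(sz)}·E_{4,2} + e^{−θ₁(sz)+θ₂(sz)−2τsz}·E_{4,3}, 𝖩₃(z) = I + e^{θ₁(sz)−θ₂(sz)−2τsz}·E_{2,1} + (1−γ)^{−1}e^{2θ₁(sz)}·E_{3,1} − e^{θ₁(sz)−θ₂(sz)+2τsz}·E_{3,4}, and 𝖩₄(z) = I − e^{θ₁(sz)−θ₂(sz)−2τsz}·E_{2,1} + (1−γ)^{−1}e^{2θ₁(sz)}·E_{3,1} + e^{θ₁(sz)−θ₂(sz)+2τsz}·E_{3,4}. Then: (a) 𝖩_j(z)^{−1} = 2I − 𝖩_j(z) for j = 1,2,3,4 and all z ∈ ℂ ∖ ℝ; (b) for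 every x ∈ (−1,0), the matrix 𝖩_𝖫(x) = [[1, 0, (1−γ)e^{−2θ₁(sx)}, (1−γ)e^{−θ₁(sx)−θ_{2,+}(sx)+2τsx}],[0, e^{θ_{2,+}(sx)−θ_{2,−}(sx)}, (1−γ)e^{−θ₁(sx)−θ_{2,−}(sx)−2τsx}, 1−γ],[0,0,1,0],[0,0,0,e^{θ_{2,−}(sx)−θ_{2,+}(sx)}]] satisfies 𝖩_𝖫(x) = 𝖩_{1,−}(x)·[[1,0,0,0],[0,0,0,1−γ],[0,0,1,0],[0,1/(γ−1),0,0]]·𝖩_{2,+}(x); and (c) for every x ∈ (0,1), the matrix 𝖩_𝖱(x) = [[e^{θ_{1,+}(sx)−θ_{1,−}(sx)}, 0, 1−γ, (1−γ)e^{−θ_{1,−}(sx)−θ₂(sx)+2τsx}],[0, 1, (1−γ)e^{−θ_{1,+}(sx)−θ₂(sx)−2τsx}, (1−γ)e^{−2θ₂(sx)}],[0,0,e^{θ_{1,−}(sx)−θ_{1,+}(sx)},0],[0,0,0,1]] satisfies 𝖩_𝖱(x) = 𝖩_{3,−}(x)·[[0,0,1−γ,0],[0,1,0,0],[1/(γ−1),0,0,0],[0,0,0,1]]·𝖩_{4,+}(x),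 where 𝖩_{j,±}(x) = lim_{ε→0⁺} 𝖩_j(x ± iε). -/

import Mathlib

open Complex Filter Topology Set Matrix

/-- `θ₁(z) = (2/3)r₁(-z)^{3/2} + 2s₁(-z)^{1/2}`, principal branches. -/
noncomputable def theta1 (r₁ s₁ : ℝ) (z : ℂ) : ℂ :=
  (2/3 : ℂ) * r₁ * (-z) ^ ((3:ℂ)/2) + 2 * (s₁ : ℂ) * (-z) ^ ((1:ℂ)/2)

/-- `θ₂(z) = (2/3)r₂ z^{3/2} + 2s₂ z^{1/2}`, principal branches. -/
noncomputable def theta2 (r₂ s₂ : ℝ) (z : ℂ) : ℂ :=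
  (2/3 : ℂ) * r₂ * z ^ ((3:ℂ)/2) + 2 * (s₂ : ℂ) * z ^ ((1:ℂ)/2)

/-- `E_{j,k}` (with 1-based indices shifted to `Fin 4`). -/
noncomputable def Estd (i j : Fin 4) : Matrix (Fin 4) (Fin 4) ℂ :=
  Matrix.single i j 1

/-- `𝖩₁(z)`. -/
noncomputable def sfJ1 (r₁ r₂ s₁ s₂ s τ γ : ℝ) (z : ℂ) : Matrix (Fin 4) (Fin 4) ℂ :=
  1 + Complex.exp (-theta1 r₁ s₁ (s * z) + theta2 r₂ s₂ (s * z) + 2 * τ * s * z) • Estd 0 1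
    + (((1:ℂ) - γ)⁻¹ * Complex.exp (2 * theta2 r₂ s₂ (s * z))) • Estd 3 1
    - Complex.exp (-theta1 r₁ s₁ (s * z) + theta2 r₂ s₂ (s * z) - 2 * τ * s * z) • Estd 3 2

/-- `𝖩₂(z)`. -/
noncomputable def sfJ2 (r₁ r₂ s₁ s₂ s τ γ : ℝ) (z : ℂ) : Matrix (Fin 4) (Fin 4) ℂ :=
  1 - Complex.exp (-theta1 r₁ s₁ (s * z) + theta2 r₂ s₂ (s * z) + 2 * τ * s * z) • Estd 0 1
    + (((1:ℂ) - γ)⁻¹ * Complex.exp (2 * theta2 r₂ s₂ (s * z))) • Estd 3 1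
    + Complex.exp (-theta1 r₁ s₁ (s * z) + theta2 r₂ s₂ (s * z) - 2 * τ * s * z) • Estd 3 2

/-- `𝖩₃(z)`. -/
noncomputable def sfJ3 (r₁ r₂ s₁ s₂ s τ γ : ℝ) (z : ℂ) : Matrix (Fin 4) (Fin 4) ℂ :=
  1 + Complex.exp (theta1 r₁ s₁ (s * z) - theta2 r₂ s₂ (s * z) - 2 * τ * s * z) • Estd 1 0
    + (((1:ℂ) - γ)⁻¹ * Complex.exp (2 * theta1 r₁ s₁ (s * z))) • Estd 2 0
    - Complex.exp (theta1 r₁ s₁ (s * z) - theta2 r₂ s₂ (s * z) + 2 * τ * s * z) • Estd 2 3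

/-- `𝖩₄(z)`. -/
noncomputable def sfJ4 (r₁ r₂ s₁ s₂ s τ γ : ℝ) (z : ℂ) : Matrix (Fin 4) (Fin 4) ℂ :=
  1 - Complex.exp (theta1 r₁ s₁ (s * z) - theta2 r₂ s₂ (s * z) - 2 * τ * s * z) • Estd 1 0
    + (((1:ℂ) - γ)⁻¹ * Complex.exp (2 * theta1 r₁ s₁ (s * z))) • Estd 2 0
    + Complex.exp (theta1 r₁ s₁ (s * z) - theta2 r₂ s₂ (s * z) + 2 * τ * s * z) • Estd 2 3


namespace GapAux

/-! ### Boundary values of powers and of `theta2` -/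

lemma tendsto_cpow_upper {w : ℝ} (hw : w < 0) (c : ℂ) {f : ℝ → ℂ}
    (hf : Tendsto f (𝓝[>] (0:ℝ)) (𝓝 (w:ℂ)))
    (him : ∀ᶠ ε in 𝓝[>] (0:ℝ), 0 < (f ε).im) :
    Tendsto (fun ε => f ε ^ c) (𝓝[>] (0:ℝ))
      (𝓝 (Complex.exp ((Real.log (-w) + Real.pi * Complex.I) * c))) := by
  have hlog : Tendsto (fun ε => Complex.log (f ε)) (𝓝[>] (0:ℝ))
      (𝓝 ((Real.log (-w) : ℂ) + Real.pi * Complex.I)) := by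
    have h1 : Tendsto f (𝓝[>] (0:ℝ)) (𝓝[{z : ℂ | 0 ≤ z.im}] (w:ℂ)) := by
      rw [tendsto_nhdsWithin_iff]
      exact ⟨hf, him.mono fun ε h => le_of_lt h⟩
    have h2 := (Complex.tendsto_log_nhdsWithin_im_nonneg_of_re_neg_of_im_zero
      (z := (w:ℂ)) (by simpa using hw) (by simp)).comp h1
    convert h2 using 2
    simp [Complex.norm_real, Real.norm_eq_abs, abs_of_neg hw]
    rw [Complex.norm_real, Real.norm_eq_abs, abs_of_neg hw]
  have hne : ∀ᶠ ε in 𝓝[>] (0:ℝ), f ε ≠ 0 := him.mono fun ε h hz => by simp [hz] at h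
  have : Tendsto (fun ε => Complex.exp (Complex.log (f ε) * c)) (𝓝[>] (0:ℝ))
      (𝓝 (Complex.exp ((Real.log (-w) + Real.pi * Complex.I) * c))) :=
    (Complex.continuous_exp.tendsto _).comp (hlog.mul_const c)
  refine this.congr' (hne.mono fun ε h => ?_)
  simpa using (Complex.cpow_def_of_ne_zero h c).symm

lemma tendsto_cpow_lower {w : ℝ} (hw : w < 0) (c : ℂ) {f : ℝ → ℂ}
    (hf : Tendsto f (𝓝[>] (0:ℝ)) (𝓝 (w:ℂ)))
    (him : ∀ᶠ ε in 𝓝[>] (0:ℝ), (f ε).im < 0) :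
    Tendsto (fun ε => f ε ^ c) (𝓝[>] (0:ℝ))
      (𝓝 (Complex.exp ((Real.log (-w) - Real.pi * Complex.I) * c))) := by
  have hlog : Tendsto (fun ε => Complex.log (f ε)) (𝓝[>] (0:ℝ))
      (𝓝 ((Real.log (-w) : ℂ) - Real.pi * Complex.I)) := by
    have h1 : Tendsto f (𝓝[>] (0:ℝ)) (𝓝[{z : ℂ | z.im < 0}] (w:ℂ)) := by
      rw [tendsto_nhdsWithin_iff]
      exact ⟨hf, him⟩
    have h2 := (Complex.tendsto_log_nhdsWithin_im_neg_of_re_neg_of_im_zero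
      (z := (w:ℂ)) (by simpa using hw) (by simp)).comp h1
    convert h2 using 2
    simp [Complex.norm_real, Real.norm_eq_abs, abs_of_neg hw]
    rw [Complex.norm_real, Real.norm_eq_abs, abs_of_neg hw]
  have hne : ∀ᶠ ε in 𝓝[>] (0:ℝ), f ε ≠ 0 := him.mono fun ε h hz => by simp [hz] at h
  have : Tendsto (fun ε => Complex.exp (Complex.log (f ε) * c)) (𝓝[>] (0:ℝ))
      (𝓝 (Complex.exp ((Real.log (-w) - Real.pi * Complex.I) * c))) :=
    (Complex.continuous_exp.tendsto _).comp (hlog.mul_const c)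
  refine this.congr' (hne.mono fun ε h => ?_)
  simpa using (Complex.cpow_def_of_ne_zero h c).symm

/-- The common boundary value expression. -/
noncomputable def bdry (r s : ℝ) (L : ℂ) : ℂ :=
  (2/3 : ℂ) * r * Complex.exp (L * ((3:ℂ)/2)) + 2 * (s : ℂ) * Complex.exp (L * ((1:ℂ)/2))

lemma bdry_lower_eq_neg (r s : ℝ) (ℓ : ℂ) :
    bdry r s (ℓ - Real.pi * Complex.I) = - bdry r s (ℓ + Real.pi * Complex.I) := by
  have hpi : Complex.exp (Real.pi * Complex.I) = -1 := Complex.exp_pi_mul_I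
  have h3 : Complex.exp ((ℓ - Real.pi * Complex.I) * ((3:ℂ)/2))
      = Complex.exp ((ℓ + Real.pi * Complex.I) * ((3:ℂ)/2)) *
        Complex.exp ((-3 : ℤ) * (Real.pi * Complex.I)) := by
    rw [← Complex.exp_add]; ring_nf
  have h1 : Complex.exp ((ℓ - Real.pi * Complex.I) * ((1:ℂ)/2))
      = Complex.exp ((ℓ + Real.pi * Complex.I) * ((1:ℂ)/2)) *
        Complex.exp ((-1 : ℤ) * (Real.pi * Complex.I)) := by
    rw [← Complex.exp_add]; ring_nf
  have e3 : Complex.exp ((-3 : ℤ) * (Real.pi * Complex.I)) = -1 := by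
    rw [Complex.exp_int_mul, hpi]; norm_num
  have e1 : Complex.exp ((-1 : ℤ) * (Real.pi * Complex.I)) = -1 := by
    rw [Complex.exp_int_mul, hpi]; norm_num
  simp only [bdry, h3, h1, e3, e1]; ring

lemma theta2_tendsto_upper {w : ℝ} (hw : w < 0) (r s : ℝ) {f : ℝ → ℂ}
    (hf : Tendsto f (𝓝[>] (0:ℝ)) (𝓝 (w:ℂ)))
    (him : ∀ᶠ ε in 𝓝[>] (0:ℝ), 0 < (f ε).im) :
    Tendsto (fun ε => theta2 r s (f ε)) (𝓝[>] (0:ℝ))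
      (𝓝 (bdry r s ((Real.log (-w) : ℂ) + Real.pi * Complex.I))) :=
  (tendsto_const_nhds.mul (tendsto_cpow_upper hw _ hf him)).add
    (tendsto_const_nhds.mul (tendsto_cpow_upper hw _ hf him))

lemma theta2_tendsto_lower {w : ℝ} (hw : w < 0) (r s : ℝ) {f : ℝ → ℂ}
    (hf : Tendsto f (𝓝[>] (0:ℝ)) (𝓝 (w:ℂ)))
    (him : ∀ᶠ ε in 𝓝[>] (0:ℝ), (f ε).im < 0) :
    Tendsto (fun ε => theta2 r s (f ε)) (𝓝[>] (0:ℝ))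
      (𝓝 (bdry r s ((Real.log (-w) : ℂ) - Real.pi * Complex.I))) :=
  (tendsto_const_nhds.mul (tendsto_cpow_lower hw _ hf him)).add
    (tendsto_const_nhds.mul (tendsto_cpow_lower hw _ hf him))

lemma theta2_tendsto_cont {w : ℂ} (hw : w ∈ Complex.slitPlane) (r s : ℝ) {f : ℝ → ℂ}
    (hf : Tendsto f (𝓝[>] (0:ℝ)) (𝓝 w)) :
    Tendsto (fun ε => theta2 r s (f ε)) (𝓝[>] (0:ℝ)) (𝓝 (theta2 r s w)) :=
  (tendsto_const_nhds.mul ((continuousAt_cpow_const hw).tendsto.comp hf)).add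
    (tendsto_const_nhds.mul ((continuousAt_cpow_const hw).tendsto.comp hf))

/-! ### Matrix algebra -/

lemma upperU_eq (c d e : ℂ) :
    (1 : Matrix (Fin 4) (Fin 4) ℂ) + c • Estd 0 1 + d • Estd 3 1 - e • Estd 3 2
      = !![1,c,0,0; 0,1,0,0; 0,0,1,0; 0,d,-e,1] := by
  ext i j
  fin_cases i <;> fin_cases j <;>
    simp [Estd, Matrix.single, Matrix.one_apply, Matrix.vecHead, Matrix.vecTail]

lemma upperV_eq (c d e : ℂ) :
    (1 : Matrix (Fin 4) (Fin 4) ℂ) - c • Estd 0 1 + d • Estd 3 1 + e • Estd 3 2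
      = !![1,-c,0,0; 0,1,0,0; 0,0,1,0; 0,d,e,1] := by
  ext i j
  fin_cases i <;> fin_cases j <;>
    simp [Estd, Matrix.single, Matrix.one_apply, Matrix.vecHead, Matrix.vecTail]

lemma lowerU_eq (c d e : ℂ) :
    (1 : Matrix (Fin 4) (Fin 4) ℂ) + c • Estd 1 0 + d • Estd 2 0 - e • Estd 2 3
      = !![1,0,0,0; c,1,0,0; d,0,1,-e; 0,0,0,1] := by
  ext i j
  fin_cases i <;> fin_cases j <;>
    simp [Estd, Matrix.single, Matrix.one_apply, Matrix.vecHead, Matrix.vecTail]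

lemma lowerV_eq (c d e : ℂ) :
    (1 : Matrix (Fin 4) (Fin 4) ℂ) - c • Estd 1 0 + d • Estd 2 0 + e • Estd 2 3
      = !![1,0,0,0; -c,1,0,0; d,0,1,e; 0,0,0,1] := by
  ext i j
  fin_cases i <;> fin_cases j <;>
    simp [Estd, Matrix.single, Matrix.one_apply, Matrix.vecHead, Matrix.vecTail]

set_option maxHeartbeats 1000000 in
lemma mul3 (p q r p' q' r' u : ℂ) :
    !![1,p,0,0; 0,1,0,0; 0,0,1,0; 0,q,-r,1]
      * !![1,0,0,0; 0,0,0,u; 0,0,1,0; 0,-u⁻¹,0,0]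
      * !![1,-p',0,0; 0,1,0,0; 0,0,1,0; 0,q',r',1]
    = !![1, -p'+p*u*q', p*u*r', p*u;
         0, u*q', u*r', u;
         0, 0, 1, 0;
         0, -u⁻¹+q*u*q', -r+q*u*r', q*u] := by
  ext i j
  fin_cases i <;> fin_cases j <;>
    simp [Matrix.mul_apply, Fin.sum_univ_four, Matrix.vecHead, Matrix.vecTail] <;> try ring

set_option maxHeartbeats 1000000 in
lemma mul3c (p q r p' q' r' u : ℂ) :
    !![1,0,0,0; p,1,0,0; q,0,1,-r; 0,0,0,1]
      * !![0,0,u,0; 0,1,0,0; -u⁻¹,0,0,0; 0,0,0,1]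
      * !![1,0,0,0; -p',1,0,0; q',0,1,r'; 0,0,0,1]
    = !![u*q', 0, u, u*r';
         -p'+p*u*q', 1, p*u, p*u*r';
         -u⁻¹+q*u*q', 0, q*u, q*u*r'-r;
         0, 0, 0, 1] := by
  ext i j
  fin_cases i <;> fin_cases j <;>
    simp [Matrix.mul_apply, Fin.sum_univ_four, Matrix.vecHead, Matrix.vecTail] <;> try ring

lemma factor_b (A θ t u : ℂ) (hu : u ≠ 0) :
    !![1, 0, u * Complex.exp (-2*θ), u * Complex.exp (-θ - A + t);
       0, Complex.exp (A - -A), u * Complex.exp (-θ - -A - t), u;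
       0, 0, 1, 0;
       0, 0, 0, Complex.exp (-A - A)]
    = !![1, Complex.exp (-θ + -A + t), 0, 0; 0,1,0,0; 0,0,1,0;
         0, u⁻¹ * Complex.exp (2 * -A), -Complex.exp (-θ + -A - t), 1]
      * !![1,0,0,0; 0,0,0,u; 0,0,1,0; 0,-u⁻¹,0,0]
      * !![1, -Complex.exp (-θ + A + t), 0, 0; 0,1,0,0; 0,0,1,0;
           0, u⁻¹ * Complex.exp (2 * A), Complex.exp (-θ + A - t), 1] := by
  rw [mul3]
  have k1 : Complex.exp (-θ + -A + t) * u * (u⁻¹ * Complex.exp (2 * A))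
      = Complex.exp (-θ + A + t) := by
    rw [mul_assoc, ← mul_assoc u, mul_inv_cancel₀ hu, one_mul, ← Complex.exp_add]; ring_nf
  have k2 : Complex.exp (-θ + -A + t) * u * Complex.exp (-θ + A - t)
      = u * Complex.exp (-2*θ) := by
    rw [mul_comm _ u, mul_assoc, ← Complex.exp_add]; ring_nf
  have k3 : u * (u⁻¹ * Complex.exp (2 * A)) = Complex.exp (A - -A) := by
    rw [← mul_assoc, mul_inv_cancel₀ hu, one_mul]; ring_nf
  have k4 : u⁻¹ * Complex.exp (2 * -A) * u * (u⁻¹ * Complex.exp (2 * A)) = u⁻¹ := by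
    field_simp [← Complex.exp_add]
    rw [← Complex.exp_add, neg_add_cancel, Complex.exp_zero]
  have k5 : u⁻¹ * Complex.exp (2 * -A) * u * Complex.exp (-θ + A - t)
      = Complex.exp (-θ + -A - t) := by
    rw [mul_comm _ u, ← mul_assoc, mul_inv_cancel₀ hu, one_mul, ← Complex.exp_add]; ring_nf
  have k6 : u⁻¹ * Complex.exp (2 * -A) * u = Complex.exp (-A - A) := by
    rw [mul_comm _ u, ← mul_assoc, mul_inv_cancel₀ hu, one_mul]; ring_nf
  rw [k1, k2, k3, k4, k5, k6]
  norm_num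
  ring_nf

lemma factor_c (A θ t u : ℂ) (hu : u ≠ 0) :
    !![Complex.exp (A - -A), 0, u, u * Complex.exp (- -A - θ + t);
       0, 1, u * Complex.exp (-A - θ - t), u * Complex.exp (-2*θ);
       0, 0, Complex.exp (-A - A), 0;
       0, 0, 0, 1]
    = !![1,0,0,0; Complex.exp (-A - θ - t),1,0,0;
         u⁻¹ * Complex.exp (2 * -A), 0, 1, -Complex.exp (-A - θ + t); 0,0,0,1]
      * !![0,0,u,0; 0,1,0,0; -u⁻¹,0,0,0; 0,0,0,1]
      * !![1,0,0,0; -Complex.exp (A - θ - t),1,0,0;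
           u⁻¹ * Complex.exp (2 * A), 0, 1, Complex.exp (A - θ + t); 0,0,0,1] := by
  rw [mul3c]
  have k1 : Complex.exp (-A - θ - t) * u * (u⁻¹ * Complex.exp (2 * A))
      = Complex.exp (A - θ - t) := by
    rw [mul_assoc, ← mul_assoc u, mul_inv_cancel₀ hu, one_mul, ← Complex.exp_add]; ring_nf
  have k2 : Complex.exp (-A - θ - t) * u * Complex.exp (A - θ + t)
      = u * Complex.exp (-2*θ) := by
    rw [mul_comm _ u, mul_assoc, ← Complex.exp_add]; ring_nf
  have k3 : u * (u⁻¹ * Complex.exp (2 * A)) = Complex.exp (A - -A) := by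
    rw [← mul_assoc, mul_inv_cancel₀ hu, one_mul]; ring_nf
  have k3' : u * Complex.exp (A - θ + t) = u * Complex.exp (- -A - θ + t) := by ring_nf
  have k4 : u⁻¹ * Complex.exp (2 * -A) * u * (u⁻¹ * Complex.exp (2 * A)) = u⁻¹ := by
    field_simp [← Complex.exp_add]
    rw [← Complex.exp_add, neg_add_cancel, Complex.exp_zero]
  have k5 : u⁻¹ * Complex.exp (2 * -A) * u * Complex.exp (A - θ + t)
      = Complex.exp (-A - θ + t) := by
    rw [mul_comm _ u, ← mul_assoc, mul_inv_cancel₀ hu, one_mul, ← Complex.exp_add]; ring_nf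
  have k6 : u⁻¹ * Complex.exp (2 * -A) * u = Complex.exp (-A - A) := by
    rw [mul_comm _ u, ← mul_assoc, mul_inv_cancel₀ hu, one_mul]; ring_nf
  rw [k1, k2, k3, k4, k5, k6]
  norm_num
  ring_nf

lemma prodU (c d e : ℂ) :
    ((1 : Matrix (Fin 4) (Fin 4) ℂ) + c • Estd 0 1 + d • Estd 3 1 - e • Estd 3 2) *
      (2 • (1 : Matrix (Fin 4) (Fin 4) ℂ)
        - ((1 : Matrix (Fin 4) (Fin 4) ℂ) + c • Estd 0 1 + d • Estd 3 1 - e • Estd 3 2)) = 1 := by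
  rw [two_smul]
  ext i j
  fin_cases i <;> fin_cases j <;>
    simp [Estd, Matrix.mul_apply, Fin.sum_univ_four, Matrix.single, Matrix.one_apply]

lemma prodV (c d e : ℂ) :
    ((1 : Matrix (Fin 4) (Fin 4) ℂ) - c • Estd 0 1 + d • Estd 3 1 + e • Estd 3 2) *
      (2 • (1 : Matrix (Fin 4) (Fin 4) ℂ)
        - ((1 : Matrix (Fin 4) (Fin 4) ℂ) - c • Estd 0 1 + d • Estd 3 1 + e • Estd 3 2)) = 1 := by
  rw [two_smul]
  ext i j
  fin_cases i <;> fin_cases j <;>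
    simp [Estd, Matrix.mul_apply, Fin.sum_univ_four, Matrix.single, Matrix.one_apply]

lemma prodLU (c d e : ℂ) :
    ((1 : Matrix (Fin 4) (Fin 4) ℂ) + c • Estd 1 0 + d • Estd 2 0 - e • Estd 2 3) *
      (2 • (1 : Matrix (Fin 4) (Fin 4) ℂ)
        - ((1 : Matrix (Fin 4) (Fin 4) ℂ) + c • Estd 1 0 + d • Estd 2 0 - e • Estd 2 3)) = 1 := by
  rw [two_smul]
  ext i j
  fin_cases i <;> fin_cases j <;>
    simp [Estd, Matrix.mul_apply, Fin.sum_univ_four, Matrix.single, Matrix.one_apply]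

lemma prodLV (c d e : ℂ) :
    ((1 : Matrix (Fin 4) (Fin 4) ℂ) - c • Estd 1 0 + d • Estd 2 0 + e • Estd 2 3) *
      (2 • (1 : Matrix (Fin 4) (Fin 4) ℂ)
        - ((1 : Matrix (Fin 4) (Fin 4) ℂ) - c • Estd 1 0 + d • Estd 2 0 + e • Estd 2 3)) = 1 := by
  rw [two_smul]
  ext i j
  fin_cases i <;> fin_cases j <;>
    simp [Estd, Matrix.mul_apply, Fin.sum_univ_four, Matrix.single, Matrix.one_apply]

lemma theta1_tendsto_cont {w : ℂ} (hw : -w ∈ Complex.slitPlane) (r s : ℝ) {f : ℝ → ℂ}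
    (hf : Tendsto f (𝓝[>] (0:ℝ)) (𝓝 w)) :
    Tendsto (fun ε => theta1 r s (f ε)) (𝓝[>] (0:ℝ)) (𝓝 (theta1 r s w)) :=
  theta2_tendsto_cont hw r s hf.neg

lemma theta1_tendsto_pos_im {w : ℝ} (hw : 0 < w) (r s : ℝ) {f : ℝ → ℂ}
    (hf : Tendsto f (𝓝[>] (0:ℝ)) (𝓝 (w:ℂ)))
    (him : ∀ᶠ ε in 𝓝[>] (0:ℝ), 0 < (f ε).im) :
    Tendsto (fun ε => theta1 r s (f ε)) (𝓝[>] (0:ℝ))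
      (𝓝 (bdry r s ((Real.log w : ℂ) - Real.pi * Complex.I))) := by
  have hf' : Tendsto (fun ε => -(f ε)) (𝓝[>] (0:ℝ)) (𝓝 ((-w : ℝ) : ℂ)) := by
    rw [Complex.ofReal_neg]; exact hf.neg
  have him' : ∀ᶠ ε in 𝓝[>] (0:ℝ), (-(f ε)).im < 0 :=
    him.mono fun ε h => by simpa using h
  have h := theta2_tendsto_lower (by linarith : -w < 0) r s hf' him'
  simp only [neg_neg] at h
  exact h

lemma theta1_tendsto_neg_im {w : ℝ} (hw : 0 < w) (r s : ℝ) {f : ℝ → ℂ}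
    (hf : Tendsto f (𝓝[>] (0:ℝ)) (𝓝 (w:ℂ)))
    (him : ∀ᶠ ε in 𝓝[>] (0:ℝ), (f ε).im < 0) :
    Tendsto (fun ε => theta1 r s (f ε)) (𝓝[>] (0:ℝ))
      (𝓝 (bdry r s ((Real.log w : ℂ) + Real.pi * Complex.I))) := by
  have hf' : Tendsto (fun ε => -(f ε)) (𝓝[>] (0:ℝ)) (𝓝 ((-w : ℝ) : ℂ)) := by
    rw [Complex.ofReal_neg]; exact hf.neg
  have him' : ∀ᶠ ε in 𝓝[>] (0:ℝ), 0 < (-(f ε)).im :=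
    him.mono fun ε h => by simpa using h
  have h := theta2_tendsto_upper (by linarith : -w < 0) r s hf' him'
  simp only [neg_neg] at h
  exact h

/-! ### Paths -/

lemma path_up (w : ℝ) :
    Tendsto (fun ε : ℝ => (w:ℂ) + (ε:ℝ) * Complex.I) (𝓝[>] (0:ℝ)) (𝓝 (w:ℂ)) := by
  have h : Tendsto (fun ε : ℝ => (w:ℂ) + (ε:ℝ) * Complex.I) (𝓝 (0:ℝ))
      (𝓝 ((w:ℂ) + ((0:ℝ):ℂ) * Complex.I)) :=
    (continuous_const.add (Complex.continuous_ofReal.mul continuous_const)).tendsto 0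
  simpa using h.mono_left nhdsWithin_le_nhds

lemma path_down (w : ℝ) :
    Tendsto (fun ε : ℝ => (w:ℂ) - (ε:ℝ) * Complex.I) (𝓝[>] (0:ℝ)) (𝓝 (w:ℂ)) := by
  have h : Tendsto (fun ε : ℝ => (w:ℂ) - (ε:ℝ) * Complex.I) (𝓝 (0:ℝ))
      (𝓝 ((w:ℂ) - ((0:ℝ):ℂ) * Complex.I)) :=
    (continuous_const.sub (Complex.continuous_ofReal.mul continuous_const)).tendsto 0
  simpa using h.mono_left nhdsWithin_le_nhds

lemma path_up_im (w : ℝ) :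
    ∀ᶠ ε in 𝓝[>] (0:ℝ), 0 < ((w:ℂ) + (ε:ℝ) * Complex.I).im := by
  filter_upwards [self_mem_nhdsWithin] with ε hε
  simpa using (hε : (0:ℝ) < ε)

lemma path_down_im (w : ℝ) :
    ∀ᶠ ε in 𝓝[>] (0:ℝ), ((w:ℂ) - (ε:ℝ) * Complex.I).im < 0 := by
  filter_upwards [self_mem_nhdsWithin] with ε hε
  simpa using (hε : (0:ℝ) < ε)

lemma spath_up (s x : ℝ) :
    Tendsto (fun ε : ℝ => (s:ℂ) * ((x:ℂ) + (ε:ℝ) * Complex.I)) (𝓝[>] (0:ℝ))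
      (𝓝 ((s * x : ℝ) : ℂ)) := by
  have h := (path_up x).const_mul (s:ℂ)
  simpa [Complex.ofReal_mul] using h

lemma spath_down (s x : ℝ) :
    Tendsto (fun ε : ℝ => (s:ℂ) * ((x:ℂ) - (ε:ℝ) * Complex.I)) (𝓝[>] (0:ℝ))
      (𝓝 ((s * x : ℝ) : ℂ)) := by
  have h := (path_down x).const_mul (s:ℂ)
  simpa [Complex.ofReal_mul] using h

lemma spath_up_im {s : ℝ} (hs : 0 < s) (x : ℝ) :
    ∀ᶠ ε in 𝓝[>] (0:ℝ), 0 < ((s:ℂ) * ((x:ℂ) + (ε:ℝ) * Complex.I)).im := by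
  filter_upwards [self_mem_nhdsWithin] with ε hε
  have : (0:ℝ) < ε := hε
  simp [Complex.mul_im]
  positivity

lemma spath_down_im {s : ℝ} (hs : 0 < s) (x : ℝ) :
    ∀ᶠ ε in 𝓝[>] (0:ℝ), ((s:ℂ) * ((x:ℂ) - (ε:ℝ) * Complex.I)).im < 0 := by
  filter_upwards [self_mem_nhdsWithin] with ε hε
  have h : (0:ℝ) < ε := hε
  simp [Complex.mul_im]
  positivity

/-! ### Matrix-valued limits -/

lemma tendstoJU {l : Filter ℝ} {f g h : ℝ → ℂ} {F G H : ℂ} (hf : Tendsto f l (𝓝 F))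
    (hg : Tendsto g l (𝓝 G)) (hh : Tendsto h l (𝓝 H)) :
    Tendsto (fun ε => (1 : Matrix (Fin 4) (Fin 4) ℂ) + f ε • Estd 0 1 + g ε • Estd 3 1
        - h ε • Estd 3 2) l
      (𝓝 ((1 : Matrix (Fin 4) (Fin 4) ℂ) + F • Estd 0 1 + G • Estd 3 1 - H • Estd 3 2)) :=
  ((tendsto_const_nhds.add (hf.smul_const _)).add (hg.smul_const _)).sub (hh.smul_const _)

lemma tendstoJV {l : Filter ℝ} {f g h : ℝ → ℂ} {F G H : ℂ} (hf : Tendsto f l (𝓝 F))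
    (hg : Tendsto g l (𝓝 G)) (hh : Tendsto h l (𝓝 H)) :
    Tendsto (fun ε => (1 : Matrix (Fin 4) (Fin 4) ℂ) - f ε • Estd 0 1 + g ε • Estd 3 1
        + h ε • Estd 3 2) l
      (𝓝 ((1 : Matrix (Fin 4) (Fin 4) ℂ) - F • Estd 0 1 + G • Estd 3 1 + H • Estd 3 2)) :=
  ((tendsto_const_nhds.sub (hf.smul_const _)).add (hg.smul_const _)).add (hh.smul_const _)

lemma tendstoJLU {l : Filter ℝ} {f g h : ℝ → ℂ} {F G H : ℂ} (hf : Tendsto f l (𝓝 F))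
    (hg : Tendsto g l (𝓝 G)) (hh : Tendsto h l (𝓝 H)) :
    Tendsto (fun ε => (1 : Matrix (Fin 4) (Fin 4) ℂ) + f ε • Estd 1 0 + g ε • Estd 2 0
        - h ε • Estd 2 3) l
      (𝓝 ((1 : Matrix (Fin 4) (Fin 4) ℂ) + F • Estd 1 0 + G • Estd 2 0 - H • Estd 2 3)) :=
  ((tendsto_const_nhds.add (hf.smul_const _)).add (hg.smul_const _)).sub (hh.smul_const _)

lemma tendstoJLV {l : Filter ℝ} {f g h : ℝ → ℂ} {F G H : ℂ} (hf : Tendsto f l (𝓝 F))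
    (hg : Tendsto g l (𝓝 G)) (hh : Tendsto h l (𝓝 H)) :
    Tendsto (fun ε => (1 : Matrix (Fin 4) (Fin 4) ℂ) - f ε • Estd 1 0 + g ε • Estd 2 0
        + h ε • Estd 2 3) l
      (𝓝 ((1 : Matrix (Fin 4) (Fin 4) ℂ) - F • Estd 1 0 + G • Estd 2 0 + H • Estd 2 3)) :=
  ((tendsto_const_nhds.sub (hf.smul_const _)).add (hg.smul_const _)).add (hh.smul_const _)

end GapAux

/-- (a) `𝖩ⱼ(z)⁻¹ = 2I − 𝖩ⱼ(z)` off `ℝ`; (b) the factorization of the jump matrix `𝖩_𝖫` on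
`(-1,0)`; (c) the factorization of the jump matrix `𝖩_𝖱` on `(0,1)`. -/
theorem gap_tacnode_lens_opening_factorization (r₁ r₂ s₁ s₂ : ℝ)
    (hr₁ : 0 < r₁) (hr₂ : 0 < r₂) (s τ γ : ℝ) (hs : 0 < s) (hγ : γ ∈ Set.Ioo (0:ℝ) 1) :
    (∀ z : ℂ, z.im ≠ 0 →
      (sfJ1 r₁ r₂ s₁ s₂ s τ γ z)⁻¹ = 2 • (1 : Matrix (Fin 4) (Fin 4) ℂ) - sfJ1 r₁ r₂ s₁ s₂ s τ γ z ∧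
      (sfJ2 r₁ r₂ s₁ s₂ s τ γ z)⁻¹ = 2 • (1 : Matrix (Fin 4) (Fin 4) ℂ) - sfJ2 r₁ r₂ s₁ s₂ s τ γ z ∧
      (sfJ3 r₁ r₂ s₁ s₂ s τ γ z)⁻¹ = 2 • (1 : Matrix (Fin 4) (Fin 4) ℂ) - sfJ3 r₁ r₂ s₁ s₂ s τ γ z ∧
      (sfJ4 r₁ r₂ s₁ s₂ s τ γ z)⁻¹ = 2 • (1 : Matrix (Fin 4) (Fin 4) ℂ) - sfJ4 r₁ r₂ s₁ s₂ s τ γ z) ∧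
    (∀ x : ℝ, -1 < x → x < 0 →
      ∃ (a b : ℂ) (M₁ M₂ : Matrix (Fin 4) (Fin 4) ℂ),
        Tendsto (fun ε : ℝ => theta2 r₂ s₂ ((s * x : ℝ) + ε * Complex.I)) (𝓝[>] (0:ℝ)) (𝓝 a) ∧
        Tendsto (fun ε : ℝ => theta2 r₂ s₂ ((s * x : ℝ) - ε * Complex.I)) (𝓝[>] (0:ℝ)) (𝓝 b) ∧
        Tendsto (fun ε : ℝ => sfJ1 r₁ r₂ s₁ s₂ s τ γ ((x:ℂ) - ε * Complex.I)) (𝓝[>] (0:ℝ)) (𝓝 M₁) ∧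
        Tendsto (fun ε : ℝ => sfJ2 r₁ r₂ s₁ s₂ s τ γ ((x:ℂ) + ε * Complex.I)) (𝓝[>] (0:ℝ)) (𝓝 M₂) ∧
        !![1, 0, ((1:ℂ) - γ) * Complex.exp (-2 * theta1 r₁ s₁ ((s * x : ℝ) : ℂ)),
              ((1:ℂ) - γ) * Complex.exp (-theta1 r₁ s₁ ((s * x : ℝ) : ℂ) - a + 2 * τ * s * x);
           0, Complex.exp (a - b),
              ((1:ℂ) - γ) * Complex.exp (-theta1 r₁ s₁ ((s * x : ℝ) : ℂ) - b - 2 * τ * s * x),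
              (1:ℂ) - γ;
           0, 0, 1, 0;
           0, 0, 0, Complex.exp (b - a)]
          = M₁ * !![1, 0, 0, 0;
                    0, 0, 0, (1:ℂ) - γ;
                    0, 0, 1, 0;
                    0, ((γ:ℂ) - 1)⁻¹, 0, 0] * M₂) ∧
    (∀ x : ℝ, 0 < x → x < 1 →
      ∃ (a b : ℂ) (M₃ M₄ : Matrix (Fin 4) (Fin 4) ℂ),
        Tendsto (fun ε : ℝ => theta1 r₁ s₁ ((s * x : ℝ) + ε * Complex.I)) (𝓝[>] (0:ℝ)) (𝓝 a) ∧
        Tendsto (fun ε : ℝ => theta1 r₁ s₁ ((s * x : ℝ) - ε * Complex.I)) (𝓝[>] (0:ℝ)) (𝓝 b) ∧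
        Tendsto (fun ε : ℝ => sfJ3 r₁ r₂ s₁ s₂ s τ γ ((x:ℂ) - ε * Complex.I)) (𝓝[>] (0:ℝ)) (𝓝 M₃) ∧
        Tendsto (fun ε : ℝ => sfJ4 r₁ r₂ s₁ s₂ s τ γ ((x:ℂ) + ε * Complex.I)) (𝓝[>] (0:ℝ)) (𝓝 M₄) ∧
        !![Complex.exp (a - b), 0, (1:ℂ) - γ,
              ((1:ℂ) - γ) * Complex.exp (-b - theta2 r₂ s₂ ((s * x : ℝ) : ℂ) + 2 * τ * s * x);
           0, 1, ((1:ℂ) - γ) * Complex.exp (-a - theta2 r₂ s₂ ((s * x : ℝ) : ℂ) - 2 * τ * s * x),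
              ((1:ℂ) - γ) * Complex.exp (-2 * theta2 r₂ s₂ ((s * x : ℝ) : ℂ));
           0, 0, Complex.exp (b - a), 0;
           0, 0, 0, 1]
          = M₃ * !![0, 0, (1:ℂ) - γ, 0;
                    0, 1, 0, 0;
                    ((γ:ℂ) - 1)⁻¹, 0, 0, 0;
                    0, 0, 0, 1] * M₄) := by
  obtain ⟨hγ0, hγ1⟩ := hγ
  have hu : ((1:ℂ) - (γ:ℝ)) ≠ 0 := by
    intro h
    rw [sub_eq_zero] at h
    have : (1:ℝ) = γ := by exact_mod_cast h
    linarith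
  have hmid : ((γ:ℂ) - 1)⁻¹ = -((1:ℂ) - (γ:ℝ))⁻¹ := by
    rw [show ((γ:ℂ) - 1) = -((1:ℂ) - (γ:ℝ)) by ring, inv_neg]
  refine ⟨?_, ?_, ?_⟩
  · intro z _
    refine ⟨?_, ?_, ?_, ?_⟩
    · exact Matrix.inv_eq_right_inv (GapAux.prodU _ _ _)
    · exact Matrix.inv_eq_right_inv (GapAux.prodV _ _ _)
    · exact Matrix.inv_eq_right_inv (GapAux.prodLU _ _ _)
    · exact Matrix.inv_eq_right_inv (GapAux.prodLV _ _ _)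
  · -- part (b)
    intro x hx1 hx0
    have hw : s * x < 0 := mul_neg_of_pos_of_neg hs hx0
    set A : ℂ := GapAux.bdry r₂ s₂ ((Real.log (-(s*x)) : ℂ) + Real.pi * Complex.I) with hA
    set θ : ℂ := theta1 r₁ s₁ ((s * x : ℝ) : ℂ) with hθ
    set t : ℂ := 2 * (τ:ℂ) * (s:ℂ) * (x:ℂ) with ht
    -- limits of theta along the sfJ paths
    have hθ1dn : Tendsto (fun ε : ℝ => theta1 r₁ s₁ ((s:ℂ) * ((x:ℂ) - (ε:ℝ) * Complex.I)))
        (𝓝[>] (0:ℝ)) (𝓝 θ) := by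
      refine GapAux.theta1_tendsto_cont ?_ r₁ s₁ (GapAux.spath_down s x)
      refine Or.inl ?_
      simpa using by linarith
    have hθ1up : Tendsto (fun ε : ℝ => theta1 r₁ s₁ ((s:ℂ) * ((x:ℂ) + (ε:ℝ) * Complex.I)))
        (𝓝[>] (0:ℝ)) (𝓝 θ) := by
      refine GapAux.theta1_tendsto_cont ?_ r₁ s₁ (GapAux.spath_up s x)
      refine Or.inl ?_
      simpa using by linarith
    have hθ2dn : Tendsto (fun ε : ℝ => theta2 r₂ s₂ ((s:ℂ) * ((x:ℂ) - (ε:ℝ) * Complex.I)))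
        (𝓝[>] (0:ℝ)) (𝓝 (-A)) := by
      have h := GapAux.theta2_tendsto_lower hw r₂ s₂ (GapAux.spath_down s x)
        (GapAux.spath_down_im hs x)
      rwa [GapAux.bdry_lower_eq_neg, ← hA] at h
    have hθ2up : Tendsto (fun ε : ℝ => theta2 r₂ s₂ ((s:ℂ) * ((x:ℂ) + (ε:ℝ) * Complex.I)))
        (𝓝[>] (0:ℝ)) (𝓝 A) :=
      GapAux.theta2_tendsto_upper hw r₂ s₂ (GapAux.spath_up s x) (GapAux.spath_up_im hs x)
    have htdn : Tendsto (fun ε : ℝ => 2 * (τ:ℂ) * (s:ℂ) * ((x:ℂ) - (ε:ℝ) * Complex.I))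
        (𝓝[>] (0:ℝ)) (𝓝 t) := (GapAux.path_down x).const_mul _
    have htup : Tendsto (fun ε : ℝ => 2 * (τ:ℂ) * (s:ℂ) * ((x:ℂ) + (ε:ℝ) * Complex.I))
        (𝓝[>] (0:ℝ)) (𝓝 t) := (GapAux.path_up x).const_mul _
    refine ⟨A, -A,
      1 + Complex.exp (-θ + -A + t) • Estd 0 1
        + (((1:ℂ) - γ)⁻¹ * Complex.exp (2 * -A)) • Estd 3 1
        - Complex.exp (-θ + -A - t) • Estd 3 2,
      1 - Complex.exp (-θ + A + t) • Estd 0 1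
        + (((1:ℂ) - γ)⁻¹ * Complex.exp (2 * A)) • Estd 3 1
        + Complex.exp (-θ + A - t) • Estd 3 2, ?_, ?_, ?_, ?_, ?_⟩
    · exact GapAux.theta2_tendsto_upper hw r₂ s₂ (GapAux.path_up _) (GapAux.path_up_im _)
    · have h := GapAux.theta2_tendsto_lower hw r₂ s₂ (GapAux.path_down _) (GapAux.path_down_im _)
      rwa [GapAux.bdry_lower_eq_neg, ← hA] at h
    · simp only [sfJ1]
      exact GapAux.tendstoJU
        ((Complex.continuous_exp.tendsto _).comp ((hθ1dn.neg.add hθ2dn).add htdn))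
        (tendsto_const_nhds.mul ((Complex.continuous_exp.tendsto _).comp (hθ2dn.const_mul 2)))
        ((Complex.continuous_exp.tendsto _).comp ((hθ1dn.neg.add hθ2dn).sub htdn))
    · simp only [sfJ2]
      exact GapAux.tendstoJV
        ((Complex.continuous_exp.tendsto _).comp ((hθ1up.neg.add hθ2up).add htup))
        (tendsto_const_nhds.mul ((Complex.continuous_exp.tendsto _).comp (hθ2up.const_mul 2)))
        ((Complex.continuous_exp.tendsto _).comp ((hθ1up.neg.add hθ2up).sub htup))
    · rw [GapAux.upperU_eq, GapAux.upperV_eq, hmid]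
      exact GapAux.factor_b A θ t _ hu
  · -- part (c)
    intro x hx0 hx1
    have hw : 0 < s * x := mul_pos hs hx0
    set A : ℂ := GapAux.bdry r₁ s₁ ((Real.log (s*x) : ℂ) - Real.pi * Complex.I) with hA
    set θ : ℂ := theta2 r₂ s₂ ((s * x : ℝ) : ℂ) with hθ
    set t : ℂ := 2 * (τ:ℂ) * (s:ℂ) * (x:ℂ) with ht
    have hnegA : GapAux.bdry r₁ s₁ ((Real.log (s*x) : ℂ) + Real.pi * Complex.I) = -A := by
      rw [hA, GapAux.bdry_lower_eq_neg, neg_neg]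
    have hθ2dn : Tendsto (fun ε : ℝ => theta2 r₂ s₂ ((s:ℂ) * ((x:ℂ) - (ε:ℝ) * Complex.I)))
        (𝓝[>] (0:ℝ)) (𝓝 θ) := by
      refine GapAux.theta2_tendsto_cont ?_ r₂ s₂ (GapAux.spath_down s x)
      refine Or.inl ?_
      simpa using hw
    have hθ2up : Tendsto (fun ε : ℝ => theta2 r₂ s₂ ((s:ℂ) * ((x:ℂ) + (ε:ℝ) * Complex.I)))
        (𝓝[>] (0:ℝ)) (𝓝 θ) := by
      refine GapAux.theta2_tendsto_cont ?_ r₂ s₂ (GapAux.spath_up s x)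
      refine Or.inl ?_
      simpa using hw
    have hθ1dn : Tendsto (fun ε : ℝ => theta1 r₁ s₁ ((s:ℂ) * ((x:ℂ) - (ε:ℝ) * Complex.I)))
        (𝓝[>] (0:ℝ)) (𝓝 (-A)) := by
      have h := GapAux.theta1_tendsto_neg_im hw r₁ s₁ (GapAux.spath_down s x)
        (GapAux.spath_down_im hs x)
      rwa [hnegA] at h
    have hθ1up : Tendsto (fun ε : ℝ => theta1 r₁ s₁ ((s:ℂ) * ((x:ℂ) + (ε:ℝ) * Complex.I)))
        (𝓝[>] (0:ℝ)) (𝓝 A) := by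
      have h := GapAux.theta1_tendsto_pos_im hw r₁ s₁ (GapAux.spath_up s x)
        (GapAux.spath_up_im hs x)
      rwa [← hA] at h
    have htdn : Tendsto (fun ε : ℝ => 2 * (τ:ℂ) * (s:ℂ) * ((x:ℂ) - (ε:ℝ) * Complex.I))
        (𝓝[>] (0:ℝ)) (𝓝 t) := (GapAux.path_down x).const_mul _
    have htup : Tendsto (fun ε : ℝ => 2 * (τ:ℂ) * (s:ℂ) * ((x:ℂ) + (ε:ℝ) * Complex.I))
        (𝓝[>] (0:ℝ)) (𝓝 t) := (GapAux.path_up x).const_mul _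
    refine ⟨A, -A,
      1 + Complex.exp (-A - θ - t) • Estd 1 0
        + (((1:ℂ) - γ)⁻¹ * Complex.exp (2 * -A)) • Estd 2 0
        - Complex.exp (-A - θ + t) • Estd 2 3,
      1 - Complex.exp (A - θ - t) • Estd 1 0
        + (((1:ℂ) - γ)⁻¹ * Complex.exp (2 * A)) • Estd 2 0
        + Complex.exp (A - θ + t) • Estd 2 3, ?_, ?_, ?_, ?_, ?_⟩
    · have h := GapAux.theta1_tendsto_pos_im hw r₁ s₁ (GapAux.path_up _) (GapAux.path_up_im _)
      rwa [← hA] at h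
    · have h := GapAux.theta1_tendsto_neg_im hw r₁ s₁ (GapAux.path_down _) (GapAux.path_down_im _)
      rwa [hnegA] at h
    · simp only [sfJ3]
      exact GapAux.tendstoJLU
        ((Complex.continuous_exp.tendsto _).comp ((hθ1dn.sub hθ2dn).sub htdn))
        (tendsto_const_nhds.mul ((Complex.continuous_exp.tendsto _).comp (hθ1dn.const_mul 2)))
        ((Complex.continuous_exp.tendsto _).comp ((hθ1dn.sub hθ2dn).add htdn))
    · simp only [sfJ4]
      exact GapAux.tendstoJLV
        ((Complex.continuous_exp.tendsto _).comp ((hθ1up.sub hθ2up).sub htup))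
        (tendsto_const_nhds.mul ((Complex.continuous_exp.tendsto _).comp (hθ1up.const_mul 2)))
        ((Complex.continuous_exp.tendsto _).comp ((hθ1up.sub hθ2up).add htup))
    · rw [GapAux.lowerU_eq, GapAux.lowerV_eq, hmid]
      exact GapAux.factor_c A θ t _ hu
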